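/- Let H be an N×N Hermitian complex matrix, λ ∈ ℝ, and Δ > 0. Let A⊥ be an N×p complex matrix with orthonormal columns (A⊥ᴴA⊥ = 1) such that H·A⊥ = A⊥·Λ⊥ for a real diagonal p×p matrix Λ⊥ whose diagonal entries all satisfy |Λ⊥_jj − λ| ≥ Δ. Let B be an N×m complex matrix with orthonormal columns (BᴴB = 1) and define the residual E = H·B − λ·B. Then the overlap with the out-of-manifold eigenspace is bounded by ‖A⊥ᴴ·B‖ ≤ ‖E‖/Δ, where ‖·‖ denotes the ℓ²-operator norm of a matrix. -/

import Mathlib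

open Matrix
open scoped Matrix.Norms.L2Operator

lemma l2_opNorm_diagonal_le {n : ℕ} (v : Fin n → ℂ) {c : ℝ} (hc : 0 ≤ c)
    (h : ∀ j, ‖v j‖ ≤ c) : ‖Matrix.diagonal v‖ ≤ c := by
  rw [Matrix.l2_opNorm_def]
  refine ContinuousLinearMap.opNorm_le_bound _ hc fun x => ?_
  rw [LinearEquiv.trans_apply]
  have hx : (Matrix.toEuclideanLin (Matrix.diagonal v)) x
      = (WithLp.equiv 2 _).symm (Matrix.diagonal v *ᵥ (WithLp.equiv 2 _) x) := by
    simp [Matrix.toEuclideanLin_apply]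
  rw [LinearMap.coe_toContinuousLinearMap', hx]
  have h1 : ‖(WithLp.equiv 2 (Fin n → ℂ)).symm (Matrix.diagonal v *ᵥ (WithLp.equiv 2 _) x)‖
      = Real.sqrt (∑ i, ‖v i * x i‖ ^ 2) := by
    rw [EuclideanSpace.norm_eq]
    congr 1
    refine Finset.sum_congr rfl fun i _ => ?_
    simp [Matrix.mulVec_diagonal]
  rw [h1]
  have h2 : ‖x‖ = Real.sqrt (∑ i, ‖x i‖ ^ 2) := EuclideanSpace.norm_eq x
  rw [h2, ← Real.sqrt_sq hc, ← Real.sqrt_mul (by positivity)]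
  apply Real.sqrt_le_sqrt
  rw [Finset.mul_sum]
  refine Finset.sum_le_sum fun i _ => ?_
  rw [norm_mul, mul_pow]
  have hv : ‖v i‖ ^ 2 ≤ c ^ 2 := pow_le_pow_left₀ (norm_nonneg _) (h i) 2
  exact mul_le_mul_of_nonneg_right hv (by positivity)

/-- **Out-of-manifold overlap bound.**
Let `H` be Hermitian, and let the columns of `A⊥` be orthonormal eigenvectors of `H`
(`H A⊥ = A⊥ Λ⊥`, `Λ⊥` real diagonal) whose eigenvalues satisfy `|Λ⊥_jj - λ| ≥ Δ > 0`.
If `B` has orthonormal columns and residual `E = H B - λ B`, then `‖A⊥ᴴ B‖ ≤ ‖E‖ / Δ`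
in the `ℓ²` operator norm. -/
theorem out_of_manifold_overlap_bound
    (N p m : ℕ)
    (H : Matrix (Fin N) (Fin N) ℂ) (hH : H.IsHermitian)
    (lam Δ : ℝ) (hΔ : 0 < Δ)
    (Aperp : Matrix (Fin N) (Fin p) ℂ) (hAperp : Aperpᴴ * Aperp = 1)
    (Λperp : Fin p → ℝ)
    (heig : H * Aperp = Aperp * Matrix.diagonal (fun j => (Λperp j : ℂ)))
    (hgap : ∀ j, Δ ≤ |Λperp j - lam|)
    (B : Matrix (Fin N) (Fin m) ℂ) (hB : Bᴴ * B = 1) :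
    ‖Aperpᴴ * B‖ ≤ ‖H * B - (lam : ℂ) • B‖ / Δ := by
  set E := H * B - (lam : ℂ) • B with hE
  set D : Matrix (Fin p) (Fin p) ℂ := Matrix.diagonal (fun j => ((Λperp j : ℂ) - lam)) with hD
  set Dinv : Matrix (Fin p) (Fin p) ℂ :=
    Matrix.diagonal (fun j => ((Λperp j : ℂ) - lam)⁻¹) with hDinv
  have hd0 : ∀ j, ((Λperp j : ℂ) - lam) ≠ 0 := by
    intro j hc
    have h1 : (Λperp j : ℂ) = (lam : ℂ) := by linear_combination hc
    have h2 : Λperp j = lam := by exact_mod_cast h1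
    have := hgap j
    rw [h2, sub_self, abs_zero] at this
    linarith
  have hDinvD : Dinv * D = 1 := by
    rw [hDinv, hD, Matrix.diagonal_mul_diagonal]
    ext i j
    by_cases hij : i = j
    · subst hij; simp [inv_mul_cancel₀ (hd0 i)]
    · simp [Matrix.diagonal_apply_ne _ hij, Matrix.one_apply_ne hij]
  -- Aᴴ H = diag(Λ) Aᴴ
  have hAH : Aperpᴴ * H = Matrix.diagonal (fun j => (Λperp j : ℂ)) * Aperpᴴ := by
    calc Aperpᴴ * H = (Hᴴ * Aperp)ᴴ := by rw [Matrix.conjTranspose_mul, Matrix.conjTranspose_conjTranspose]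
    _ = (H * Aperp)ᴴ := by rw [hH.eq]
    _ = (Aperp * Matrix.diagonal (fun j => (Λperp j : ℂ)))ᴴ := by rw [heig]
    _ = Matrix.diagonal (fun j => (Λperp j : ℂ)) * Aperpᴴ := by
        rw [Matrix.conjTranspose_mul, Matrix.diagonal_conjTranspose]
        congr 1
        ext i j
        simp [Matrix.diagonal]
  have key : Aperpᴴ * E = D * (Aperpᴴ * B) := by
    rw [hE, hD, Matrix.mul_sub, Matrix.mul_smul, ← Matrix.mul_assoc, hAH, Matrix.mul_assoc]
    have : Matrix.diagonal (fun j => ((Λperp j : ℂ) - lam)) =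
        Matrix.diagonal (fun j => (Λperp j : ℂ)) - (lam : ℂ) • (1 : Matrix (Fin p) (Fin p) ℂ) := by
      ext i j
      by_cases hij : i = j
      · subst hij; simp [Matrix.one_apply]
      · simp [Matrix.diagonal_apply_ne _ hij, Matrix.one_apply_ne hij]
    rw [this, Matrix.sub_mul, Matrix.smul_mul, Matrix.one_mul]
  have hfactor : Aperpᴴ * B = Dinv * (Aperpᴴ * E) := by
    rw [key, ← Matrix.mul_assoc, hDinvD, Matrix.one_mul]
  have hnormA : ‖Aperpᴴ‖ ≤ 1 := by
    have h1 : ‖Aperpᴴ * Aperp‖ = ‖Aperp‖ * ‖Aperp‖ := Matrix.l2_opNorm_conjTranspose_mul_self _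
    rw [hAperp] at h1
    have hone : ‖(1 : Matrix (Fin p) (Fin p) ℂ)‖ ≤ 1 := by
      rw [Matrix.l2_opNorm_def]
      have hid : (Matrix.toEuclideanLin.trans LinearMap.toContinuousLinearMap)
          (1 : Matrix (Fin p) (Fin p) ℂ)
          = (ContinuousLinearMap.id ℂ (EuclideanSpace ℂ (Fin p))) := by
        ext x i
        simp [LinearEquiv.trans_apply, Matrix.toEuclideanLin_apply, Matrix.one_mulVec]
      rw [hid]
      exact ContinuousLinearMap.norm_id_le
    have hA1 : ‖Aperp‖ ≤ 1 := by
      nlinarith [norm_nonneg Aperp, h1, hone]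
    calc ‖Aperpᴴ‖ = ‖Aperp‖ := Matrix.l2_opNorm_conjTranspose _
    _ ≤ 1 := hA1
  have hDinvNorm : ‖Dinv‖ ≤ 1 / Δ := by
    rw [hDinv]
    refine l2_opNorm_diagonal_le _ (by positivity) fun j => ?_
    rw [norm_inv]
    rw [one_div]
    refine inv_anti₀ hΔ ?_
    calc Δ ≤ |Λperp j - lam| := hgap j
    _ = ‖((Λperp j : ℂ) - lam)‖ := by
        rw [← Real.norm_eq_abs, ← Complex.norm_real]
        norm_num
  calc ‖Aperpᴴ * B‖ = ‖Dinv * (Aperpᴴ * E)‖ := by rw [hfactor]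
  _ ≤ ‖Dinv‖ * ‖Aperpᴴ * E‖ := Matrix.l2_opNorm_mul _ _
  _ ≤ ‖Dinv‖ * (‖Aperpᴴ‖ * ‖E‖) := by
      refine mul_le_mul_of_nonneg_left (Matrix.l2_opNorm_mul _ _) (norm_nonneg _)
  _ ≤ (1 / Δ) * (1 * ‖E‖) := by
      refine mul_le_mul hDinvNorm ?_ (by positivity) (by positivity)
      exact mul_le_mul_of_nonneg_right hnormA (norm_nonneg _)
  _ = ‖E‖ / Δ := by ring
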